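/- Let Ω ⊂ ℝ³ be a bounded Lebesgue-measurable set with |Ω| > 0, and let ρ : Ω → [0, ∞) be integrable with total mass M₀ = ∫_Ω ρ dx > 0. Suppose additionally that ∫_Ω ρ·max(log ρ, 0) dx ≤ C for some finite C ≥ 0 (with the integrand interpreted as 0 where ρ = 0). Set δ = M₀/(3|Ω|) and α = max(e, exp(3C/M₀)). Then the set where the density exceeds δ has measure bounded below: |{x ∈ Ω : ρ(x) > δ}| ≥ M₀/(3α) > 0. -/

import Mathlib

open MeasureTheory
set_option maxHeartbeats 1000000 in

/-- No large vacuum regions: if `ρ ≥ 0` on a bounded measurable `Ω ⊂ ℝ³` of positive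
measure with total mass `M₀ > 0` and `∫ ρ·max(log ρ, 0) ≤ C`, then with
`δ = M₀/(3|Ω|)` and `α = max(e, exp(3C/M₀))`, the set `{ρ > δ}` has measure at least
`M₀/(3α) > 0`. -/
theorem density_above_threshold_measure
    (Ω : Set (EuclideanSpace ℝ (Fin 3)))
    (hΩm : MeasurableSet Ω) (hΩb : Bornology.IsBounded Ω) (hΩpos : 0 < volume Ω)
    (ρ : EuclideanSpace ℝ (Fin 3) → ℝ)
    (hρ0 : ∀ x ∈ Ω, 0 ≤ ρ x)
    (hρint : IntegrableOn ρ Ω)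
    (M₀ C : ℝ)
    (hM₀def : M₀ = ∫ x in Ω, ρ x) (hM₀pos : 0 < M₀)
    (hC0 : 0 ≤ C)
    (hlogint : IntegrableOn (fun x => ρ x * max (Real.log (ρ x)) 0) Ω)
    (hlog : (∫ x in Ω, ρ x * max (Real.log (ρ x)) 0) ≤ C) :
    ENNReal.ofReal (M₀ / (3 * max (Real.exp 1) (Real.exp (3 * C / M₀))))
        ≤ volume {x ∈ Ω | M₀ / (3 * (volume Ω).toReal) < ρ x} ∧
      0 < M₀ / (3 * max (Real.exp 1) (Real.exp (3 * C / M₀))) := by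
  set α := max (Real.exp 1) (Real.exp (3 * C / M₀)) with hαdef
  set δ := M₀ / (3 * (volume Ω).toReal) with hδdef
  have hΩfin : volume Ω < ⊤ := hΩb.measure_lt_top
  have hΩr : 0 < (volume Ω).toReal := ENNReal.toReal_pos hΩpos.ne' hΩfin.ne
  have hαexp : α = Real.exp (max 1 (3 * C / M₀)) := by
    rw [hαdef]
    rcases le_total 1 (3 * C / M₀) with h | h
    · rw [max_eq_right h, max_eq_right (Real.exp_le_exp.2 h)]
    · rw [max_eq_left h, max_eq_left (Real.exp_le_exp.2 h)]
  have hαpos : 0 < α := hαexp ▸ Real.exp_pos _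
  have hlogα : Real.log α = max 1 (3 * C / M₀) := by rw [hαexp, Real.log_exp]
  have hlogα1 : 1 ≤ Real.log α := hlogα ▸ le_max_left _ _
  have hlogαC : 3 * C / M₀ ≤ Real.log α := hlogα ▸ le_max_right _ _
  have hpos : 0 < M₀ / (3 * α) := by positivity
  refine ⟨?_, hpos⟩
  set μ := volume.restrict Ω with hμ
  have heq : ρ =ᵐ[μ] hρint.1.mk ρ := hρint.1.ae_eq_mk
  set g := hρint.1.mk ρ with hgdef
  have hgm : Measurable g := hρint.1.stronglyMeasurable_mk.measurable
  have hgint : Integrable g μ := hρint.congr heq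
  have hg0 : ∀ᵐ x ∂μ, 0 ≤ g x := by
    have h1 : ∀ᵐ x ∂μ, 0 ≤ ρ x := (ae_restrict_iff' hΩm).2 (ae_of_all _ hρ0)
    filter_upwards [h1, heq] with x h1 h2
    rw [← h2]; exact h1
  have hgM : ∫ x, g x ∂μ = M₀ := by
    rw [hM₀def]; exact (integral_congr_ae heq).symm
  have hglogint : Integrable (fun x => g x * max (Real.log (g x)) 0) μ := by
    refine hlogint.congr ?_
    filter_upwards [heq] with x hx
    rw [hx]
  have hglog : ∫ x, g x * max (Real.log (g x)) 0 ∂μ ≤ C := by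
    refine le_trans (le_of_eq ?_) hlog
    exact (integral_congr_ae (heq.mono fun x hx => by rw [hx])).symm
  set A : Set (EuclideanSpace ℝ (Fin 3)) := {x | g x ≤ δ} with hAdef
  have hA : MeasurableSet A := measurableSet_le hgm measurable_const
  have hAc : Aᶜ = {x | δ < g x} := by ext x; simp [hAdef, not_le]
  set B : Set (EuclideanSpace ℝ (Fin 3)) := {x | δ < g x ∧ g x ≤ α} with hBdef
  have hB : MeasurableSet B :=
    (measurableSet_lt measurable_const hgm).inter (measurableSet_le hgm measurable_const)
  set D : Set (EuclideanSpace ℝ (Fin 3)) := {x | α < g x} with hDdef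
  have hD : MeasurableSet D := measurableSet_lt measurable_const hgm
  set E : Set (EuclideanSpace ℝ (Fin 3)) := {x | δ < g x ∧ α < g x} with hEdef
  have hE : MeasurableSet E := (measurableSet_lt measurable_const hgm).inter hD
  have hsplit1 : ∫ x in A, g x ∂μ + ∫ x in Aᶜ, g x ∂μ = M₀ := by
    rw [← hgM]; exact integral_add_compl hA hgint
  have hBE : Aᶜ = B ∪ E := by
    ext x
    simp only [hAc, hBdef, hEdef, Set.mem_setOf_eq, Set.mem_union]
    constructor
    · intro h
      rcases le_or_gt (g x) α with h2 | h2
      · exact Or.inl ⟨h, h2⟩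
      · exact Or.inr ⟨h, h2⟩
    · rintro (⟨h, _⟩ | ⟨h, _⟩) <;> exact h
  have hdisj : Disjoint B E := by
    rw [Set.disjoint_left]
    rintro x ⟨_, h1⟩ ⟨_, h2⟩
    exact absurd h1 (not_le.2 h2)
  have hsplit2 : ∫ x in Aᶜ, g x ∂μ = ∫ x in B, g x ∂μ + ∫ x in E, g x ∂μ := by
    rw [hBE]
    exact setIntegral_union hdisj hE hgint.integrableOn hgint.integrableOn
  have hμA : ∀ s : Set (EuclideanSpace ℝ (Fin 3)), μ s ≤ volume Ω := by
    intro s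
    calc μ s ≤ μ Set.univ := measure_mono (Set.subset_univ _)
    _ = volume Ω := by rw [hμ, Measure.restrict_apply_univ]
  have hbA : ∫ x in A, g x ∂μ ≤ M₀ / 3 := by
    have h1 : ∫ x in A, g x ∂μ ≤ ∫ _x in A, δ ∂μ :=
      setIntegral_mono_on hgint.integrableOn
        (integrableOn_const (lt_of_le_of_lt (hμA A) hΩfin).ne) hA fun x hx => hx
    rw [setIntegral_const, smul_eq_mul, measureReal_def] at h1
    have h2 : (μ A).toReal ≤ (volume Ω).toReal := ENNReal.toReal_mono hΩfin.ne (hμA A)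
    have hδpos : 0 < δ := by rw [hδdef]; positivity
    have h3 : (μ A).toReal * δ ≤ (volume Ω).toReal * δ := by nlinarith
    have h4 : (volume Ω).toReal * δ = M₀ / 3 := by
      rw [hδdef]; field_simp
    linarith
  have hbD : ∫ x in D, g x ∂μ ≤ M₀ / 3 := by
    have hpt : ∀ x ∈ D, Real.log α * g x ≤ g x * max (Real.log (g x)) 0 := by
      intro x hx
      have hgx : α < g x := hx
      have hgxpos : 0 < g x := lt_trans hαpos hgx
      have hlog1 : Real.log α ≤ Real.log (g x) := Real.log_le_log hαpos hgx.le
      have hmax : max (Real.log (g x)) 0 = Real.log (g x) :=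
        max_eq_left (le_trans (by linarith) hlog1)
      rw [hmax]
      nlinarith
    have h1 : ∫ x in D, Real.log α * g x ∂μ ≤ ∫ x in D, g x * max (Real.log (g x)) 0 ∂μ :=
      setIntegral_mono_on (hgint.integrableOn.const_mul _) hglogint.integrableOn hD hpt
    have h2 : ∫ x in D, g x * max (Real.log (g x)) 0 ∂μ
        ≤ ∫ x, g x * max (Real.log (g x)) 0 ∂μ := by
      refine setIntegral_le_integral hglogint ?_
      filter_upwards [hg0] with x hx
      exact mul_nonneg hx (le_max_right _ _)
    have h3 : Real.log α * ∫ x in D, g x ∂μ ≤ C := by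
      rw [← integral_const_mul]
      exact le_trans h1 (le_trans h2 hglog)
    have h4 : C ≤ Real.log α * (M₀ / 3) := by
      rw [div_le_iff₀ hM₀pos] at hlogαC
      nlinarith
    have h5 : Real.log α * ∫ x in D, g x ∂μ ≤ Real.log α * (M₀ / 3) := le_trans h3 h4
    exact le_of_mul_le_mul_left h5 (by linarith)
  have hbE : ∫ x in E, g x ∂μ ≤ M₀ / 3 := by
    refine le_trans ?_ hbD
    refine setIntegral_mono_set hgint.integrableOn ?_
      (HasSubset.Subset.eventuallyLE fun x hx => hx.2)
    exact ae_restrict_of_ae hg0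
  have hbB : M₀ / 3 ≤ ∫ x in B, g x ∂μ := by linarith
  have hBα : ∫ x in B, g x ∂μ ≤ (μ B).toReal * α := by
    have h1 : ∫ x in B, g x ∂μ ≤ ∫ _x in B, α ∂μ :=
      setIntegral_mono_on hgint.integrableOn
        (integrableOn_const (lt_of_le_of_lt (hμA B) hΩfin).ne) hB fun x hx => hx.2
    rw [setIntegral_const, smul_eq_mul, measureReal_def] at h1
    exact h1
  have hμB : M₀ / (3 * α) ≤ (μ B).toReal := by
    rw [div_le_iff₀ (by positivity)]
    nlinarith
  have hμBfin : μ B ≠ ⊤ := (lt_of_le_of_lt (hμA B) hΩfin).ne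
  have htarget : {x ∈ Ω | δ < ρ x} = {x | δ < ρ x} ∩ Ω := by
    ext x; simp only [Set.mem_setOf_eq, Set.mem_inter_iff]; tauto
  have hkey : μ B ≤ volume {x ∈ Ω | δ < ρ x} := by
    rw [htarget, ← Measure.restrict_apply' hΩm]
    have hae : {x | δ < g x} =ᵐ[μ] {x | δ < ρ x} := by
      filter_upwards [heq] with x hx
      change (δ < g x) = (δ < ρ x)
      rw [hx]
    calc μ B ≤ μ {x | δ < g x} := measure_mono fun x hx => hx.1
    _ = μ {x | δ < ρ x} := measure_congr hae
  refine le_trans ?_ hkey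
  rw [← ENNReal.ofReal_toReal hμBfin]
  exact ENNReal.ofReal_le_ofReal hμB
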